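/- Under the hypotheses of the algebraic-dichotomy linearization theorem (algebraic dichotomy for x' = A(t)x with constants K, α; ‖f(t,x)‖ ≤ β μ'(t)/μ(t); ‖f(t,x₁) − f(t,x₂)‖ ≤ γ (μ'(t)/μ(t)) ‖x₁ − x₂‖; 6Kγα⁻¹ < 1), define H(t,x) = x + h(t,(t,x)) and G(t,y) = y + g(t,(t,y)), where h(·,(τ,ξ)) is the unique bounded solution of Z' = A(t)Z − f(t, X(t,τ,ξ)) and g(·,(τ,ξ)) is the unique bounded solution of Z' = A(t)Z + f(t, Y(t,τ,ξ) + Z). Then H(t, G(t,y)) = y for every t ∈ ℝ and every y ∈ ℝⁿ. -/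

import Mathlib

open MeasureTheory Filter Set
open RealInnerProductSpace

private lemma gronwall_zero {m : ℕ} (d d' : ℝ → EuclideanSpace ℝ (Fin m))
    (L Λ : ℝ → ℝ) (hΛ : ∀ t, HasDerivAt Λ (L t) t)
    (hd : ∀ t, HasDerivAt d (d' t) t) (hb : ∀ t, ‖d' t‖ ≤ L t * ‖d t‖)
    (τ : ℝ) (hτ : d τ = 0) : ∀ t, d t = 0 := by
  have hφ : ∀ t, HasDerivAt (fun s => ⟪d s, d s⟫) (2 * ⟪d' t, d t⟫) t := by
    intro t
    have h0 := (hd t).inner ℝ (hd t)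
    refine h0.congr_deriv ?_
    rw [real_inner_comm (d' t) (d t)]
    ring
  have hip : ∀ t, |⟪d' t, d t⟫| ≤ L t * ⟪d t, d t⟫ := by
    intro t
    calc |⟪d' t, d t⟫| ≤ ‖d' t‖ * ‖d t‖ := abs_real_inner_le_norm _ _
    _ ≤ (L t * ‖d t‖) * ‖d t‖ := by
        exact mul_le_mul_of_nonneg_right (hb t) (norm_nonneg _)
    _ = L t * ⟪d t, d t⟫ := by rw [real_inner_self_eq_norm_sq]; ring
  have hnn : ∀ t, (0:ℝ) ≤ ⟪d t, d t⟫ := fun t => real_inner_self_nonneg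
  have hτ0 : ⟪d τ, d τ⟫ = 0 := by rw [hτ]; simp
  intro t
  rcases le_total τ t with hle | hle
  · -- forward: u = exp(-2Λ) * φ is antitone
    set u : ℝ → ℝ := fun s => Real.exp (-2 * Λ s) * ⟪d s, d s⟫ with hu_def
    have hu : ∀ s, HasDerivAt u
        (Real.exp (-2 * Λ s) * (-2 * L s) * ⟪d s, d s⟫ +
          Real.exp (-2 * Λ s) * (2 * ⟪d' s, d s⟫)) s := by
      intro s
      exact (((hΛ s).const_mul (-2)).exp).mul (hφ s)
    have hanti : Antitone u := by
      apply antitone_of_deriv_nonpos (fun s => (hu s).differentiableAt)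
      intro s
      rw [(hu s).deriv]
      have h1 := (abs_le.mp (hip s)).2
      have he := Real.exp_pos (-2 * Λ s)
      nlinarith [mul_le_mul_of_nonneg_left h1 he.le]
    have h1 : u t ≤ u τ := hanti hle
    have h2 : u τ = 0 := by rw [hu_def]; simp [hτ0, hτ]
    have h3 : 0 ≤ u t := mul_nonneg (Real.exp_pos _).le (hnn t)
    have h4 : u t = 0 := le_antisymm (h2 ▸ h1) h3
    have h5 : ⟪d t, d t⟫ = 0 := by
      have := Real.exp_pos (-2 * Λ t)
      rcases mul_eq_zero.mp h4 with h | h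
      · exact absurd h this.ne'
      · exact h
    exact inner_self_eq_zero.mp h5
  · -- backward: v = exp(2Λ) * φ is monotone
    set u : ℝ → ℝ := fun s => Real.exp (2 * Λ s) * ⟪d s, d s⟫ with hu_def
    have hu : ∀ s, HasDerivAt u
        (Real.exp (2 * Λ s) * (2 * L s) * ⟪d s, d s⟫ +
          Real.exp (2 * Λ s) * (2 * ⟪d' s, d s⟫)) s := by
      intro s
      exact (((hΛ s).const_mul 2).exp).mul (hφ s)
    have hmono : Monotone u := by
      apply monotone_of_deriv_nonneg (fun s => (hu s).differentiableAt)
      intro s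
      rw [(hu s).deriv]
      have h1 := (abs_le.mp (hip s)).1
      have he := Real.exp_pos (2 * Λ s)
      nlinarith [mul_le_mul_of_nonneg_left h1 he.le]
    have h1 : u t ≤ u τ := hmono hle
    have h2 : u τ = 0 := by rw [hu_def]; simp [hτ0, hτ]
    have h3 : 0 ≤ u t := mul_nonneg (Real.exp_pos _).le (hnn t)
    have h4 : u t = 0 := le_antisymm (h2 ▸ h1) h3
    have h5 : ⟪d t, d t⟫ = 0 := by
      have := Real.exp_pos (2 * Λ t)
      rcases mul_eq_zero.mp h4 with h | h
      · exact absurd h this.ne'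
      · exact h
    exact inner_self_eq_zero.mp h5


theorem H_comp_G_eq_id {n : ℕ}
    (μ μ' : ℝ → ℝ)
    (hμ_pos : ∀ t, 0 < μ t)
    (hμ_mono : StrictMono μ)
    (hμ_zero : μ 0 = 1)
    (hμ_bot : Filter.Tendsto μ Filter.atBot (nhds 0))
    (hμ_top : Filter.Tendsto μ Filter.atTop Filter.atTop)
    (hμ_deriv : ∀ t, HasDerivAt μ (μ' t) t)
    (A : ℝ → EuclideanSpace ℝ (Fin n) →L[ℝ] EuclideanSpace ℝ (Fin n))
    (hA_cont : Continuous A)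
    (hA_bdd : ∃ C, ∀ t, ‖A t‖ ≤ C)
    (T : ℝ → ℝ → EuclideanSpace ℝ (Fin n) →L[ℝ] EuclideanSpace ℝ (Fin n))
    (hT_id : ∀ t, T t t = ContinuousLinearMap.id ℝ (EuclideanSpace ℝ (Fin n)))
    (hT_cocycle : ∀ t τ s, (T t τ).comp (T τ s) = T t s)
    (hT_sol : ∀ s x₀ t, HasDerivAt (fun r => T r s x₀) (A t (T t s x₀)) t)
    (P : ℝ → EuclideanSpace ℝ (Fin n) →L[ℝ] EuclideanSpace ℝ (Fin n))
    (hP_proj : ∀ s, (P s).comp (P s) = P s)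
    (K α : ℝ) (hK : 0 < K) (hα : 0 < α)
    (h_commute : ∀ t s, (T t s).comp (P s) = (P t).comp (T t s))
    (h_dichP : ∀ t s, s ≤ t → ‖(T t s).comp (P s)‖ ≤ K * (μ t / μ s) ^ (-α))
    (h_dichQ : ∀ t s, t ≤ s →
      ‖(T t s).comp (ContinuousLinearMap.id ℝ (EuclideanSpace ℝ (Fin n)) - P s)‖ ≤ K * (μ s / μ t) ^ (-α))
    (f : ℝ → EuclideanSpace ℝ (Fin n) → EuclideanSpace ℝ (Fin n))
    (β γ : ℝ)
    (hf_bdd : ∀ t x, ‖f t x‖ ≤ β * (μ' t / μ t))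
    (hf_lip : ∀ t x₁ x₂, ‖f t x₁ - f t x₂‖ ≤ γ * (μ' t / μ t) * ‖x₁ - x₂‖)
    (h_small : 6 * K * γ * α⁻¹ < 1)
    (X : ℝ → ℝ → EuclideanSpace ℝ (Fin n) → EuclideanSpace ℝ (Fin n))
    (hX_init : ∀ τ ξ, X τ τ ξ = ξ)
    (hX_sol : ∀ τ ξ t, HasDerivAt (fun r => X r τ ξ) (A t (X t τ ξ) + f t (X t τ ξ)) t)
    (hX_flow : ∀ t s τ ξ, X t s (X s τ ξ) = X t τ ξ)
    (Y : ℝ → ℝ → EuclideanSpace ℝ (Fin n) → EuclideanSpace ℝ (Fin n))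
    (hY_init : ∀ τ ξ, Y τ τ ξ = ξ)
    (hY_sol : ∀ τ ξ t, HasDerivAt (fun r => Y r τ ξ) (A t (Y t τ ξ)) t)
    (hY_flow : ∀ t s τ ξ, Y t s (Y s τ ξ) = Y t τ ξ)
    (h : ℝ → ℝ → EuclideanSpace ℝ (Fin n) → EuclideanSpace ℝ (Fin n))
    (hh_sol : ∀ τ ξ t, HasDerivAt (fun r => h r τ ξ) (A t (h t τ ξ) - f t (X t τ ξ)) t)
    (hh_bdd : ∀ τ ξ, ∃ C, ∀ t, ‖h t τ ξ‖ ≤ C)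
    (hh_unique : ∀ τ ξ (z : ℝ → EuclideanSpace ℝ (Fin n)),
      (∀ t, HasDerivAt z (A t (z t) - f t (X t τ ξ)) t) →
      (∃ C, ∀ t, ‖z t‖ ≤ C) → ∀ t, z t = h t τ ξ)
    (g : ℝ → ℝ → EuclideanSpace ℝ (Fin n) → EuclideanSpace ℝ (Fin n))
    (hg_sol : ∀ τ ξ t, HasDerivAt (fun r => g r τ ξ) (A t (g t τ ξ) + f t (Y t τ ξ + g t τ ξ)) t)
    (hg_bdd : ∀ τ ξ, ∃ C, ∀ t, ‖g t τ ξ‖ ≤ C)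
    (hg_unique : ∀ τ ξ (z : ℝ → EuclideanSpace ℝ (Fin n)),
      (∀ t, HasDerivAt z (A t (z t) + f t (Y t τ ξ + z t)) t) →
      (∃ C, ∀ t, ‖z t‖ ≤ C) → ∀ t, z t = g t τ ξ)
    (H G : ℝ → EuclideanSpace ℝ (Fin n) → EuclideanSpace ℝ (Fin n))
    (hH_def : ∀ t x, H t x = x + h t t x)
    (hG_def : ∀ t y, G t y = y + g t t y) :
    ∀ t y, H t (G t y) = y := by
  intro τ y
  obtain ⟨C, hC⟩ := hA_bdd
  set ξ := y + g τ τ y with hξ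
  have hΛ : ∀ t, HasDerivAt (fun s => C * s + γ * Real.log (μ s))
      (C + γ * (μ' t / μ t)) t := by
    intro t
    have h1 : HasDerivAt (fun s : ℝ => C * s) C t := by
      simpa using (hasDerivAt_id t).const_mul C
    have h2 : HasDerivAt (fun s => Real.log (μ s)) (μ' t / μ t) t :=
      (hμ_deriv t).log (hμ_pos t).ne'
    exact h1.add (h2.const_mul γ)
  have hw : ∀ t, HasDerivAt (fun r => Y r τ y + g r τ y)
      (A t (Y t τ y + g t τ y) + f t (Y t τ y + g t τ y)) t := by
    intro t
    have h0 := (hY_sol τ y t).add (hg_sol τ y t)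
    refine h0.congr_deriv ?_
    rw [map_add]; abel
  have hd : ∀ t, HasDerivAt (fun r => X r τ ξ - (Y r τ y + g r τ y))
      ((A t (X t τ ξ) + f t (X t τ ξ)) -
        (A t (Y t τ y + g t τ y) + f t (Y t τ y + g t τ y))) t :=
    fun t => (hX_sol τ ξ t).sub (hw t)
  have hb : ∀ t, ‖(A t (X t τ ξ) + f t (X t τ ξ)) -
        (A t (Y t τ y + g t τ y) + f t (Y t τ y + g t τ y))‖ ≤
      (C + γ * (μ' t / μ t)) * ‖X t τ ξ - (Y t τ y + g t τ y)‖ := by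
    intro t
    have he : (A t (X t τ ξ) + f t (X t τ ξ)) -
        (A t (Y t τ y + g t τ y) + f t (Y t τ y + g t τ y)) =
        A t (X t τ ξ - (Y t τ y + g t τ y)) +
          (f t (X t τ ξ) - f t (Y t τ y + g t τ y)) := by
      rw [map_sub]; abel
    rw [he]
    calc ‖A t (X t τ ξ - (Y t τ y + g t τ y)) +
          (f t (X t τ ξ) - f t (Y t τ y + g t τ y))‖
        ≤ ‖A t (X t τ ξ - (Y t τ y + g t τ y))‖ +
          ‖f t (X t τ ξ) - f t (Y t τ y + g t τ y)‖ := norm_add_le _ _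
      _ ≤ C * ‖X t τ ξ - (Y t τ y + g t τ y)‖ +
          γ * (μ' t / μ t) * ‖X t τ ξ - (Y t τ y + g t τ y)‖ := by
          refine add_le_add ?_ (hf_lip t _ _)
          exact le_trans ((A t).le_opNorm _)
            (mul_le_mul_of_nonneg_right (hC t) (norm_nonneg _))
      _ = (C + γ * (μ' t / μ t)) * ‖X t τ ξ - (Y t τ y + g t τ y)‖ := by ring
  have hτ0 : X τ τ ξ - (Y τ τ y + g τ τ y) = 0 := by
    rw [hX_init, hY_init, hξ]; abel
  have hstep1 : ∀ t, X t τ ξ = Y t τ y + g t τ y := by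
    intro t
    have hz := gronwall_zero (fun r => X r τ ξ - (Y r τ y + g r τ y))
      (fun t => (A t (X t τ ξ) + f t (X t τ ξ)) -
        (A t (Y t τ y + g t τ y) + f t (Y t τ y + g t τ y)))
      (fun t => C + γ * (μ' t / μ t)) (fun s => C * s + γ * Real.log (μ s))
      hΛ hd hb τ hτ0 t
    exact sub_eq_zero.mp hz
  have hz_sol : ∀ t, HasDerivAt (fun r => -(g r τ y))
      (A t (-(g t τ y)) - f t (X t τ ξ)) t := by
    intro t
    have h0 := (hg_sol τ y t).neg
    refine h0.congr_deriv ?_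
    rw [hstep1 t, map_neg]; abel
  obtain ⟨C', hC'⟩ := hg_bdd τ y
  have key := hh_unique τ ξ (fun r => -(g r τ y)) hz_sol
    ⟨C', fun t => by simpa using hC' t⟩ τ
  rw [hG_def, hH_def]
  have hkey : h τ τ (y + g τ τ y) = -(g τ τ y) := by
    rw [← hξ]; exact key.symm
  rw [hkey]; abel
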